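/- Let C be a triangulated category with split idempotents and X a full additive subcategory of C. Assume: (a) every object A of C admits a distinguished triangle Σ⁻¹A → X₀ → X₁ →f A with X₀, X₁ ∈ X and f a right X-approximation of A, and a distinguished triangle A →g X'₁ → X'₂ → ΣA with X'₁, X'₂ ∈ X and g a left X-approximation of A; and (b) for every distinguished triangle A₀ →f₀ A₁ →f₁ A₂ →f₂ ΣA₀ in C, if f̄₁ is an epimorphism in C/X then f₀ is X-monic, and if f̄₀ is a monomorphism in C/X then f₁ is X-epic. Then the additive quotient category C/X is an abelian category. -/

import Mathlib

set_option linter.unusedSectionVars false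


open CategoryTheory CategoryTheory.Limits CategoryTheory.Pretriangulated

universe v u

variable {C : Type u} [Category.{v} C] [Preadditive C] [HasZeroObject C]
  [HasShift C ℤ] [∀ n : ℤ, (shiftFunctor C n).Additive] [Pretriangulated C]

/-- `f` factors through an object satisfying `X`. -/
def FactorsThru (X : C → Prop) {A B : C} (f : A ⟶ B) : Prop :=
  ∃ (X₀ : C) (g : A ⟶ X₀) (h : X₀ ⟶ B), X X₀ ∧ g ≫ h = f

/-- The hom relation on `C` identifying two morphisms when their difference factors
through an object of `X`; the quotient category `C/X` is the quotient by this relation. -/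
def homRelOf (X : C → Prop) : HomRel C :=
  fun {A B : C} (f g : A ⟶ B) => FactorsThru X (f - g)

/-- The additive quotient category `C/X`. -/
abbrev QuotCat (X : C → Prop) := CategoryTheory.Quotient (homRelOf X)

/-- The quotient functor `C ⥤ C/X`, sending a morphism `f` to its class `f̄`. -/
abbrev quotFunctor (X : C → Prop) : C ⥤ QuotCat X := Quotient.functor _

/-- `X` is a full additive subcategory: it contains the zero objects and is closed under
isomorphisms, finite direct sums and direct summands. -/
structure IsAdditiveClosed (X : C → Prop) : Prop where
  zero : ∀ Z : C, IsZero Z → X Z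
  iso : ∀ {A B : C}, (A ≅ B) → X A → X B
  biprod : ∀ {A B : C} (b : BinaryBicone A B), Nonempty b.IsBilimit → X A → X B → X b.pt
  summand : ∀ {A B : C} (i : A ⟶ B) (p : B ⟶ A), i ≫ p = 𝟙 A → X B → X A

/-- `X` is a cluster-tilting subcategory of the triangulated category `C`:
it is a full additive subcategory such that (i) `Hom(X₁, ΣX₂) = 0` for all `X₁, X₂ ∈ X`, and
(ii) every object `A` fits into a distinguished triangle `X₀ ⟶ X₁ ⟶ A ⟶ ΣX₀` with
`X₀, X₁ ∈ X`. -/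
structure IsClusterTilting (X : C → Prop) extends IsAdditiveClosed X : Prop where
  hom_shift_zero : ∀ {X₁ X₂ : C}, X X₁ → X X₂ → ∀ f : X₁ ⟶ X₂⟦(1 : ℤ)⟧, f = 0
  exists_triangle : ∀ A : C, ∃ (X₀ X₁ : C) (f : X₀ ⟶ X₁) (g : X₁ ⟶ A) (h : A ⟶ X₀⟦(1 : ℤ)⟧),
    X X₀ ∧ X X₁ ∧ Triangle.mk f g h ∈ distTriang C

/-- `f : A ⟶ B` is `X`-monic: every morphism from `A` to an object of `X` factors through `f`. -/
def XMonic (X : C → Prop) {A B : C} (f : A ⟶ B) : Prop :=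
  ∀ X' : C, X X' → ∀ u : A ⟶ X', ∃ v : B ⟶ X', f ≫ v = u

/-- `f : A ⟶ B` is `X`-epic: every morphism from an object of `X` to `B` factors through `f`. -/
def XEpic (X : C → Prop) {A B : C} (f : A ⟶ B) : Prop :=
  ∀ X' : C, X X' → ∀ u : X' ⟶ B, ∃ v : X' ⟶ A, v ≫ f = u

section Aux

variable {X : C → Prop}

lemma factorsThru_zero (hX : IsAdditiveClosed X) (A B : C) : FactorsThru X (0 : A ⟶ B) := by
  obtain ⟨Z, hZ⟩ := HasZeroObject.zero (C := C)
  exact ⟨Z, 0, 0, hX.zero Z hZ, by simp⟩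

lemma FactorsThru.add (hX : IsAdditiveClosed X) {A B : C} {f g : A ⟶ B}
    (hf : FactorsThru X f) (hg : FactorsThru X g) : FactorsThru X (f + g) := by
  obtain ⟨U, p, q, hU, hpq⟩ := hf
  obtain ⟨V, p', q', hV, hpq'⟩ := hg
  refine ⟨U ⊞ V, biprod.lift p p', biprod.desc q q', ?_, by rw [biprod.lift_desc, hpq, hpq']⟩
  exact hX.biprod (BinaryBiproduct.bicone U V) ⟨BinaryBiproduct.isBilimit U V⟩ hU hV

lemma FactorsThru.neg {A B : C} {f : A ⟶ B} (hf : FactorsThru X f) : FactorsThru X (-f) := by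
  obtain ⟨U, p, q, hU, hpq⟩ := hf
  exact ⟨U, -p, q, hU, by rw [Preadditive.neg_comp, hpq]⟩

lemma FactorsThru.precomp {A B D : C} {g : B ⟶ D} (hg : FactorsThru X g) (f : A ⟶ B) :
    FactorsThru X (f ≫ g) := by
  obtain ⟨U, p, q, hU, hpq⟩ := hg
  exact ⟨U, f ≫ p, q, hU, by rw [Category.assoc, hpq]⟩

lemma FactorsThru.postcomp {A B D : C} {f : A ⟶ B} (hf : FactorsThru X f) (g : B ⟶ D) :
    FactorsThru X (f ≫ g) := by
  obtain ⟨U, p, q, hU, hpq⟩ := hf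
  exact ⟨U, p, q ≫ g, hU, by rw [← Category.assoc, hpq]⟩

lemma factorsThru_of_mem {A B : C} (hB : X B) (f : A ⟶ B) : FactorsThru X f :=
  ⟨B, f, 𝟙 B, hB, Category.comp_id f⟩

lemma factorsThru_of_mem' {A B : C} (hA : X A) (f : A ⟶ B) : FactorsThru X f :=
  ⟨A, 𝟙 A, f, hA, Category.id_comp f⟩

lemma congruence_homRelOf (hX : IsAdditiveClosed X) : Congruence (homRelOf X) where
  equivalence :=
    { refl := fun f => by
        show FactorsThru X (f - f)
        rw [sub_self]
        exact factorsThru_zero hX _ _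
      symm := fun {f g} h => by
        show FactorsThru X (g - f)
        have := FactorsThru.neg (X := X) h
        rwa [neg_sub] at this
      trans := fun {f g h} h1 h2 => by
        show FactorsThru X (f - h)
        have := FactorsThru.add hX h1 h2
        rwa [sub_add_sub_cancel] at this }
  comp_left := by
    intro A B D f g g' h
    show FactorsThru X (f ≫ g - f ≫ g')
    rw [← Preadditive.comp_sub]
    exact FactorsThru.precomp h f
  comp_right := by
    intro A B D f f' g h
    show FactorsThru X (f ≫ g - f' ≫ g)
    rw [← Preadditive.sub_comp]
    exact FactorsThru.postcomp h g

/-- If `T` is a distinguished triangle with `T.mor₁` `X`-monic, then any morphism out of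
`T.obj₃` which becomes `X`-trivial after composing with `T.mor₂` is itself `X`-trivial. -/
lemma factorsThru_of_epi_side (hX : IsAdditiveClosed X)
    (ha1 : ∀ A : C, ∃ (X₀ X₁ : C) (u : X₀ ⟶ X₁) (f : X₁ ⟶ A) (h : A ⟶ X₀⟦(1 : ℤ)⟧),
      X X₀ ∧ X X₁ ∧ XEpic X f ∧ Triangle.mk u f h ∈ distTriang C)
    (T : Triangle C) (hT : T ∈ distTriang C) (hmon : XMonic X T.mor₁)
    {W : C} (s : T.obj₃ ⟶ W) (hs : FactorsThru X (T.mor₂ ≫ s)) : FactorsThru X s := by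
  obtain ⟨U, a, b, hU, hab⟩ := hs
  obtain ⟨Y₀, Y₁, u₀, r, θ, hY₀, hY₁, hr, hTr⟩ := ha1 W
  obtain ⟨b', hb'⟩ := hr U hU b
  have hz : r ≫ θ = 0 := comp_distTriang_mor_zero₂₃ _ hTr
  have h1 : T.mor₂ ≫ s ≫ θ = 0 := by
    rw [← Category.assoc, ← hab, ← hb', Category.assoc, Category.assoc, hz,
      comp_zero, comp_zero]
  obtain ⟨g, hg⟩ := Triangle.yoneda_exact₃ T hT (s ≫ θ) h1
  obtain ⟨g'', hg''⟩ := hmon Y₀ hY₀ ((shiftFunctor C (1 : ℤ)).preimage g)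
  have h2 : s ≫ θ = 0 := by
    have hpre : (shiftFunctor C (1 : ℤ)).map ((shiftFunctor C (1 : ℤ)).preimage g) = g :=
      CategoryTheory.Functor.map_preimage _ _
    have hz31 : T.mor₃ ≫ (shiftFunctor C (1 : ℤ)).map T.mor₁ = 0 :=
      comp_distTriang_mor_zero₃₁ _ hT
    rw [hg, ← hpre, ← hg'', CategoryTheory.Functor.map_comp, ← Category.assoc, hz31, zero_comp]
  obtain ⟨w, hw⟩ := Triangle.coyoneda_exact₃ _ hTr s h2
  exact ⟨Y₁, w, r, hY₁, hw.symm⟩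

/-- If `T` is a distinguished triangle with `T.mor₂` `X`-epic, then any morphism into
`T.obj₁` which becomes `X`-trivial after composing with `T.mor₁` is itself `X`-trivial. -/
lemma factorsThru_of_mono_side (hX : IsAdditiveClosed X)
    (ha2 : ∀ A : C, ∃ (Y₁ Y₂ : C) (l : A ⟶ Y₁) (v : Y₁ ⟶ Y₂) (w : Y₂ ⟶ A⟦(1 : ℤ)⟧),
      X Y₁ ∧ X Y₂ ∧ XMonic X l ∧ Triangle.mk l v w ∈ distTriang C)
    (T : Triangle C) (hT : T ∈ distTriang C) (hepi : XEpic X T.mor₂)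
    {W : C} (s : W ⟶ T.obj₁) (hs : FactorsThru X (s ≫ T.mor₁)) : FactorsThru X s := by
  obtain ⟨U, a, b, hU, hab⟩ := hs
  obtain ⟨Y₁, Y₂, l, v, w, hY₁, hY₂, hl, hTl⟩ := ha2 W
  obtain ⟨a', ha'⟩ := hl U hU a
  have hT' : (Triangle.mk l v w).invRotate ∈ distTriang C := inv_rot_of_distTriang _ hTl
  have hz : (Triangle.mk l v w).invRotate.mor₁ ≫ l = 0 := comp_distTriang_mor_zero₁₂ _ hT'
  have h1 : ((Triangle.mk l v w).invRotate.mor₁ ≫ s) ≫ T.mor₁ = 0 := by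
    have hsl : s ≫ T.mor₁ = l ≫ (a' ≫ b) := by rw [← hab, ← ha', Category.assoc]
    erw [Category.assoc, hsl, ← Category.assoc, hz, zero_comp]
  have h1' : ((Triangle.mk l v w).invRotate.mor₁ ≫ s) ≫ T.invRotate.mor₂ = 0 := h1
  obtain ⟨g, hg⟩ := Triangle.coyoneda_exact₂ T.invRotate (inv_rot_of_distTriang _ hT) _ h1'
  obtain ⟨g₁, hg₁⟩ := hepi Y₂ hY₂ ((shiftFunctor C (-1 : ℤ)).preimage g)
  have h2 : (Triangle.mk l v w).invRotate.mor₁ ≫ s = 0 := by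
    have hpre : (shiftFunctor C (-1 : ℤ)).map ((shiftFunctor C (-1 : ℤ)).preimage g) = g :=
      CategoryTheory.Functor.map_preimage _ _
    have hz23 : T.mor₂ ≫ T.mor₃ = 0 := comp_distTriang_mor_zero₂₃ _ hT
    have hmain : (shiftFunctor C (-1 : ℤ)).map T.mor₂ ≫ T.invRotate.mor₁ = 0 := by
      simp only [Triangle.invRotate_mor₁]
      erw [Preadditive.comp_neg, ← Category.assoc, ← CategoryTheory.Functor.map_comp, hz23, CategoryTheory.Functor.map_zero,
        zero_comp, neg_zero]
    rw [hg, ← hpre]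
    erw [← hg₁]
    erw [CategoryTheory.Functor.map_comp, Category.assoc, hmain, comp_zero]
    rfl
  obtain ⟨t, ht⟩ := Triangle.yoneda_exact₂ _ hT' s h2
  exact ⟨Y₁, l, t, hY₁, ht.symm⟩

lemma exists_cofactor (T : Triangle C) (hT : T ∈ distTriang C) (hmon : XMonic X T.mor₁)
    {W : C} (u : T.obj₂ ⟶ W) (hu : FactorsThru X (T.mor₁ ≫ u)) :
    ∃ t : T.obj₃ ⟶ W, FactorsThru X (u - T.mor₂ ≫ t) := by
  obtain ⟨U, p, q, hU, hpq⟩ := hu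
  obtain ⟨p', hp'⟩ := hmon U hU p
  have h0 : T.mor₁ ≫ (u - p' ≫ q) = 0 := by
    rw [Preadditive.comp_sub, ← Category.assoc, hp', hpq, sub_self]
  obtain ⟨t, ht⟩ := Triangle.yoneda_exact₂ T hT _ h0
  exact ⟨t, U, p', q, hU, by rw [← ht, sub_sub_cancel]⟩

lemma exists_kerfactor (T : Triangle C) (hT : T ∈ distTriang C) (hepi : XEpic X T.mor₂)
    {W : C} (u : W ⟶ T.obj₂) (hu : FactorsThru X (u ≫ T.mor₂)) :
    ∃ t : W ⟶ T.obj₁, FactorsThru X (u - t ≫ T.mor₁) := by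
  obtain ⟨U, p, q, hU, hpq⟩ := hu
  obtain ⟨q', hq'⟩ := hepi U hU q
  have h0 : (u - p ≫ q') ≫ T.mor₂ = 0 := by
    rw [Preadditive.sub_comp, Category.assoc, hq', hpq, sub_self]
  obtain ⟨t, ht⟩ := Triangle.coyoneda_exact₂ T hT _ h0
  exact ⟨t, U, p, q', hU, by rw [← ht, sub_sub_cancel]⟩

end Aux

/-- If every object admits suitable approximation triangles with respect to a
full additive subcategory `X` (condition (a)), and condition (b) relating epis/monos in `C/X`
with `X`-monic/`X`-epic morphisms holds, then `C/X` is abelian. -/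
theorem quotient_is_abelian_of_conditions [IsIdempotentComplete C]
    (X : C → Prop) (hX : IsAdditiveClosed X)
    (ha : ∀ A : C,
      (∃ (X₀ X₁ : C) (u : X₀ ⟶ X₁) (f : X₁ ⟶ A) (h : A ⟶ X₀⟦(1 : ℤ)⟧),
        X X₀ ∧ X X₁ ∧ XEpic X f ∧ Triangle.mk u f h ∈ distTriang C) ∧
      (∃ (X₁' X₂' : C) (g : A ⟶ X₁') (v : X₁' ⟶ X₂') (h : X₂' ⟶ A⟦(1 : ℤ)⟧),
        X X₁' ∧ X X₂' ∧ XMonic X g ∧ Triangle.mk g v h ∈ distTriang C))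
    (hb : ∀ (A₀ A₁ A₂ : C) (f₀ : A₀ ⟶ A₁) (f₁ : A₁ ⟶ A₂) (f₂ : A₂ ⟶ A₀⟦(1 : ℤ)⟧),
      (Triangle.mk f₀ f₁ f₂ ∈ distTriang C) →
        (Epi ((quotFunctor X).map f₁) → XMonic X f₀) ∧
        (Mono ((quotFunctor X).map f₀) → XEpic X f₁)) :
    Nonempty (Abelian (QuotCat X)) := by
  classical
  have ha1 := fun A : C => (ha A).1
  have ha2 := fun A : C => (ha A).2
  haveI hcong : Congruence (homRelOf X) := congruence_homRelOf hX
  have hadd : ∀ ⦃A B : C⦄ (f₁ f₂ g₁ g₂ : A ⟶ B), homRelOf X f₁ f₂ → homRelOf X g₁ g₂ →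
      homRelOf X (f₁ + g₁) (f₂ + g₂) := by
    intro A B f₁ f₂ g₁ g₂ h1 h2
    show FactorsThru X (f₁ + g₁ - (f₂ + g₂))
    have := FactorsThru.add hX h1 h2
    rwa [sub_add_sub_comm] at this
  letI instP : Preadditive (QuotCat X) := Quotient.preadditive _ hadd
  haveI instAdd : (quotFunctor X).Additive := Quotient.functor_additive _ hadd
  have hmapeq : ∀ {A B : C} (f g : A ⟶ B),
      (quotFunctor X).map f = (quotFunctor X).map g ↔ FactorsThru X (f - g) := by
    intro A B f g
    exact Quotient.functor_map_eq_iff (homRelOf X) f g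
  have hmap0 : ∀ {A B : C} (f : A ⟶ B), (quotFunctor X).map f = 0 ↔ FactorsThru X f := by
    intro A B f
    have h0 : (quotFunctor X).map (0 : A ⟶ B) = 0 := CategoryTheory.Functor.map_zero _ _ _
    constructor
    · intro h
      have := (hmapeq f 0).1 (by rw [h, h0])
      rwa [sub_zero] at this
    · intro h
      rw [← h0]
      exact (hmapeq f 0).2 (by rwa [sub_zero])
  -- zero object
  obtain ⟨Z0, hZ0⟩ := HasZeroObject.zero (C := C)
  haveI : HasZeroObject (QuotCat X) := by
    refine ⟨(quotFunctor X).obj Z0, ?_⟩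
    rw [IsZero.iff_id_eq_zero, ← (quotFunctor X).map_id, (IsZero.iff_id_eq_zero Z0).1 hZ0]
    exact CategoryTheory.Functor.map_zero _ _ _
  -- binary biproducts
  haveI : HasBinaryBiproducts (QuotCat X) := by
    constructor
    intro P Q
    obtain ⟨Pa⟩ := P; obtain ⟨Qa⟩ := Q
    refine HasBinaryBiproduct.mk ⟨{
        pt := (quotFunctor X).obj (Pa ⊞ Qa)
        fst := (quotFunctor X).map biprod.fst
        snd := (quotFunctor X).map biprod.snd
        inl := (quotFunctor X).map biprod.inl
        inr := (quotFunctor X).map biprod.inr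
        inl_fst := by rw [← CategoryTheory.Functor.map_comp, biprod.inl_fst, CategoryTheory.Functor.map_id]; rfl
        inl_snd := by rw [← CategoryTheory.Functor.map_comp, biprod.inl_snd]; exact CategoryTheory.Functor.map_zero _ _ _
        inr_fst := by rw [← CategoryTheory.Functor.map_comp, biprod.inr_fst]; exact CategoryTheory.Functor.map_zero _ _ _
        inr_snd := by rw [← CategoryTheory.Functor.map_comp, biprod.inr_snd, CategoryTheory.Functor.map_id]; rfl }, ?_⟩
    apply isBinaryBilimitOfTotal
    dsimp only
    rw [← CategoryTheory.Functor.map_comp (quotFunctor X) biprod.fst biprod.inl, ← CategoryTheory.Functor.map_comp (quotFunctor X) biprod.snd biprod.inr, ← CategoryTheory.Functor.map_add, biprod.total, CategoryTheory.Functor.map_id]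
  haveI : HasFiniteProducts (QuotCat X) := hasFiniteProducts_of_has_binary_and_terminal
  -- epi and mono criteria
  have epi_of : ∀ {A B : C} (f : A ⟶ B),
      (∀ (W : C) (s : B ⟶ W), FactorsThru X (f ≫ s) → FactorsThru X s) →
      Epi ((quotFunctor X).map f) := by
    intro A B f hcrit
    constructor
    intro W g g' e
    obtain ⟨Wa⟩ := W
    obtain ⟨s, rfl⟩ := (quotFunctor X).map_surjective g
    obtain ⟨s', rfl⟩ := (quotFunctor X).map_surjective g'
    rw [← CategoryTheory.Functor.map_comp, ← CategoryTheory.Functor.map_comp] at e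
    have h := (hmapeq _ _).1 e
    rw [← Preadditive.comp_sub] at h
    exact (hmapeq _ _).2 (hcrit _ _ h)
  have mono_of : ∀ {A B : C} (f : A ⟶ B),
      (∀ (W : C) (s : W ⟶ A), FactorsThru X (s ≫ f) → FactorsThru X s) →
      Mono ((quotFunctor X).map f) := by
    intro A B f hcrit
    constructor
    intro W g g' e
    obtain ⟨Wa⟩ := W
    obtain ⟨s, rfl⟩ := (quotFunctor X).map_surjective g
    obtain ⟨s', rfl⟩ := (quotFunctor X).map_surjective g'
    rw [← CategoryTheory.Functor.map_comp, ← CategoryTheory.Functor.map_comp] at e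
    have h := (hmapeq _ _).1 e
    rw [← Preadditive.sub_comp] at h
    exact (hmapeq _ _).2 (hcrit _ _ h)
  -- cokernel forks from triangles with X-monic first morphism
  have cofork_nonempty : ∀ (T : Triangle C), (T ∈ distTriang C) →
      XMonic X T.mor₁ → Epi ((quotFunctor X).map T.mor₂) →
      ∀ (w : (quotFunctor X).map T.mor₁ ≫ (quotFunctor X).map T.mor₂ = 0),
      Nonempty (IsColimit (CokernelCofork.ofπ ((quotFunctor X).map T.mor₂) w)) := by
    intro T hT hmon hepi w
    haveI := hepi
    have key : ∀ {W : QuotCat X} (k : (quotFunctor X).obj T.obj₂ ⟶ W),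
        (quotFunctor X).map T.mor₁ ≫ k = 0 →
        ∃ d : (quotFunctor X).obj T.obj₃ ⟶ W, (quotFunctor X).map T.mor₂ ≫ d = k := by
      intro W k hk
      obtain ⟨Wa⟩ := W
      obtain ⟨u, rfl⟩ := (quotFunctor X).map_surjective k
      rw [← CategoryTheory.Functor.map_comp] at hk
      obtain ⟨t, ht⟩ := exists_cofactor T hT hmon u ((hmap0 _).1 hk)
      refine ⟨(quotFunctor X).map t, ?_⟩
      rw [← CategoryTheory.Functor.map_comp]
      apply (hmapeq _ _).2
      have := FactorsThru.neg (X := X) ht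
      rwa [neg_sub] at this
    exact ⟨CokernelCofork.IsColimit.ofπ _ w (fun {W} k hk => (key k hk).choose)
      (fun {W} k hk => (key k hk).choose_spec)
      (fun {W} k hk m hm => by
        rw [← cancel_epi ((quotFunctor X).map T.mor₂), hm, (key k hk).choose_spec])⟩
  -- kernel forks from triangles with X-epic second morphism
  have fork_nonempty : ∀ (T : Triangle C), (T ∈ distTriang C) →
      XEpic X T.mor₂ → Mono ((quotFunctor X).map T.mor₁) →
      ∀ (w : (quotFunctor X).map T.mor₁ ≫ (quotFunctor X).map T.mor₂ = 0),
      Nonempty (IsLimit (KernelFork.ofι ((quotFunctor X).map T.mor₁) w)) := by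
    intro T hT hepi hmono w
    haveI := hmono
    have key : ∀ {W : QuotCat X} (k : W ⟶ (quotFunctor X).obj T.obj₂),
        k ≫ (quotFunctor X).map T.mor₂ = 0 →
        ∃ d : W ⟶ (quotFunctor X).obj T.obj₁, d ≫ (quotFunctor X).map T.mor₁ = k := by
      intro W k hk
      obtain ⟨Wa⟩ := W
      obtain ⟨u, rfl⟩ := (quotFunctor X).map_surjective k
      rw [← CategoryTheory.Functor.map_comp] at hk
      obtain ⟨t, ht⟩ := exists_kerfactor T hT hepi u ((hmap0 _).1 hk)
      refine ⟨(quotFunctor X).map t, ?_⟩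
      rw [← CategoryTheory.Functor.map_comp]
      apply (hmapeq _ _).2
      have := FactorsThru.neg (X := X) ht
      rwa [neg_sub] at this
    exact ⟨KernelFork.IsLimit.ofι _ w (fun {W} k hk => (key k hk).choose)
      (fun {W} k hk => (key k hk).choose_spec)
      (fun {W} k hk m hm => by
        rw [← cancel_mono ((quotFunctor X).map T.mor₁), hm, (key k hk).choose_spec])⟩
  -- the class of (fst ≫ inl) is the identity, when the second biproduct summand is in X
  have relTot : ∀ {B Y : C}, X Y →
      (quotFunctor X).map (biprod.fst ≫ biprod.inl : B ⊞ Y ⟶ B ⊞ Y) = 𝟙 _ := by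
    intro B Y hY
    rw [← (quotFunctor X).map_id]
    apply (hmapeq _ _).2
    have htot : (biprod.fst ≫ biprod.inl : B ⊞ Y ⟶ _) + biprod.snd ≫ biprod.inr = 𝟙 _ :=
      biprod.total
    have heq : (biprod.fst ≫ biprod.inl : B ⊞ Y ⟶ _) - 𝟙 _ = -(biprod.snd ≫ biprod.inr) := by
      rw [← htot]; abel
    rw [heq]
    exact (FactorsThru.postcomp (factorsThru_of_mem hY biprod.snd) biprod.inr).neg
  have isoInl : ∀ {B Y : C}, X Y →
      IsIso ((quotFunctor X).map (biprod.inl : B ⟶ B ⊞ Y)) := by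
    intro B Y hY
    refine ⟨(quotFunctor X).map biprod.fst, ?_, ?_⟩
    · rw [← CategoryTheory.Functor.map_comp, biprod.inl_fst, CategoryTheory.Functor.map_id]
    · rw [← CategoryTheory.Functor.map_comp]; exact relTot hY
  have isoFst : ∀ {B Y : C}, X Y →
      IsIso ((quotFunctor X).map (biprod.fst : B ⊞ Y ⟶ B)) := by
    intro B Y hY
    refine ⟨(quotFunctor X).map biprod.inl, ?_, ?_⟩
    · rw [← CategoryTheory.Functor.map_comp]; exact relTot hY
    · rw [← CategoryTheory.Functor.map_comp, biprod.inl_fst, CategoryTheory.Functor.map_id]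
  -- cokernels
  have hasCokMap : ∀ {A B : C} (f : A ⟶ B), HasCokernel ((quotFunctor X).map f) := by
    intro A B f
    obtain ⟨X₁', X₂', g, v, hv, hX₁', hX₂', hgmon, hTg⟩ := ha2 A
    have hLmon : XMonic X (biprod.lift f g) := by
      intro U hU u
      obtain ⟨w', hw'⟩ := hgmon U hU u
      exact ⟨biprod.snd ≫ w', by rw [← Category.assoc, biprod.lift_snd, hw']⟩
    obtain ⟨D, m, δ, hTm⟩ := distinguished_cocone_triangle (biprod.lift f g)
    have hepi : Epi ((quotFunctor X).map m) := by
      apply epi_of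
      intro W s hs
      exact factorsThru_of_epi_side hX ha1 _ hTm hLmon s hs
    have w0 : (quotFunctor X).map (biprod.lift f g) ≫ (quotFunctor X).map m = 0 := by
      rw [← CategoryTheory.Functor.map_comp]
      have hz : biprod.lift f g ≫ m = 0 := comp_distTriang_mor_zero₁₂ _ hTm
      rw [hz]
      exact CategoryTheory.Functor.map_zero _ _ _
    have hcolim := cofork_nonempty _ hTm hLmon hepi w0
    haveI : HasCokernel ((quotFunctor X).map (biprod.lift f g)) :=
      HasColimit.mk ⟨_, hcolim.some⟩
    haveI := isoInl (B := B) hX₁'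
    have hfl : (quotFunctor X).map (biprod.lift f g) =
        (quotFunctor X).map f ≫ (quotFunctor X).map (biprod.inl : B ⟶ B ⊞ X₁') := by
      rw [← CategoryTheory.Functor.map_comp]
      apply (hmapeq _ _).2
      have heq : biprod.lift f g - f ≫ biprod.inl = g ≫ biprod.inr := by
        rw [biprod.lift_eq]; abel
      rw [heq]
      exact FactorsThru.postcomp (factorsThru_of_mem hX₁' g) biprod.inr
    have hc : HasCokernel ((quotFunctor X).map (biprod.lift f g) ≫
        inv ((quotFunctor X).map (biprod.inl : B ⟶ B ⊞ X₁'))) := hasCokernel_comp_iso _ _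
    have heq2 : (quotFunctor X).map (biprod.lift f g) ≫
        inv ((quotFunctor X).map (biprod.inl : B ⟶ B ⊞ X₁')) = (quotFunctor X).map f := by
      rw [hfl, Category.assoc, IsIso.hom_inv_id, Category.comp_id]
    rwa [heq2] at hc
  haveI : HasCokernels (QuotCat X) := by
    constructor
    intro P Q φ
    obtain ⟨Pa⟩ := P; obtain ⟨Qa⟩ := Q
    obtain ⟨f, rfl⟩ := (quotFunctor X).map_surjective φ
    exact hasCokMap f
  -- kernels
  have hasKerMap : ∀ {A B : C} (f : A ⟶ B), HasKernel ((quotFunctor X).map f) := by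
    intro A B f
    obtain ⟨X₀, X₁, u₀, r, h', hX₀, hX₁, hrepi, hTr⟩ := ha1 B
    have hKepi : XEpic X (biprod.desc f r) := by
      intro U hU u
      obtain ⟨w', hw'⟩ := hrepi U hU u
      exact ⟨w' ≫ biprod.inr, by rw [Category.assoc, biprod.inr_desc, hw']⟩
    obtain ⟨E, k, δ, hTk⟩ := distinguished_cocone_triangle₁ (biprod.desc f r)
    have hmono : Mono ((quotFunctor X).map k) := by
      apply mono_of
      intro W s hs
      exact factorsThru_of_mono_side hX ha2 _ hTk hKepi s hs
    have w0 : (quotFunctor X).map k ≫ (quotFunctor X).map (biprod.desc f r) = 0 := by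
      rw [← CategoryTheory.Functor.map_comp]
      have hz : k ≫ biprod.desc f r = 0 := comp_distTriang_mor_zero₁₂ _ hTk
      rw [hz]
      exact CategoryTheory.Functor.map_zero _ _ _
    have hlim := fork_nonempty _ hTk hKepi hmono w0
    haveI : HasKernel ((quotFunctor X).map (biprod.desc f r)) :=
      HasLimit.mk ⟨_, hlim.some⟩
    haveI := isoFst (B := A) hX₁
    have hfk : (quotFunctor X).map (biprod.desc f r) =
        (quotFunctor X).map (biprod.fst : A ⊞ X₁ ⟶ A) ≫ (quotFunctor X).map f := by
      rw [← CategoryTheory.Functor.map_comp]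
      apply (hmapeq _ _).2
      have heq : biprod.desc f r - biprod.fst ≫ f = biprod.snd ≫ r := by
        rw [biprod.desc_eq]; abel
      rw [heq]
      exact FactorsThru.precomp (factorsThru_of_mem' hX₁ r) biprod.snd
    have hk : HasKernel (inv ((quotFunctor X).map (biprod.fst : A ⊞ X₁ ⟶ A)) ≫
        (quotFunctor X).map (biprod.desc f r)) := hasKernel_iso_comp _ _
    have heq2 : inv ((quotFunctor X).map (biprod.fst : A ⊞ X₁ ⟶ A)) ≫
        (quotFunctor X).map (biprod.desc f r) = (quotFunctor X).map f := by
      rw [hfk, IsIso.inv_hom_id_assoc]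
    rwa [heq2] at hk
  haveI : HasKernels (QuotCat X) := by
    constructor
    intro P Q φ
    obtain ⟨Pa⟩ := P; obtain ⟨Qa⟩ := Q
    obtain ⟨f, rfl⟩ := (quotFunctor X).map_surjective φ
    exact hasKerMap f
  -- normal epi category
  haveI instNE : IsNormalEpiCategory (QuotCat X) := by
    constructor
    intro P Q φ hφ
    have hne : Nonempty (NormalEpi φ) := by
      obtain ⟨Pa⟩ := P; obtain ⟨Qa⟩ := Q
      obtain ⟨f, rfl⟩ := (quotFunctor X).map_surjective φ
      obtain ⟨E, z, δ, hTz⟩ := distinguished_cocone_triangle₁ f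
      have hz : XMonic X z := (hb E Pa Qa z f δ hTz).1 hφ
      have w0 : (quotFunctor X).map z ≫ (quotFunctor X).map f = 0 := by
        rw [← CategoryTheory.Functor.map_comp]
        have hz0 : z ≫ f = 0 := comp_distTriang_mor_zero₁₂ _ hTz
        rw [hz0]
        exact CategoryTheory.Functor.map_zero _ _ _
      exact ⟨{ W := (quotFunctor X).obj E
               g := (quotFunctor X).map z
               w := w0
               isColimit := (cofork_nonempty (Triangle.mk z f δ) hTz hz hφ w0).some }⟩
    exact hne
  -- normal mono category
  haveI instNM : IsNormalMonoCategory (QuotCat X) := by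
    constructor
    intro P Q φ hφ
    have hne : Nonempty (NormalMono φ) := by
      obtain ⟨Pa⟩ := P; obtain ⟨Qa⟩ := Q
      obtain ⟨f, rfl⟩ := (quotFunctor X).map_surjective φ
      obtain ⟨Cc, g, δ, hTg⟩ := distinguished_cocone_triangle f
      have hg : XEpic X g := (hb Pa Qa Cc f g δ hTg).2 hφ
      have w0 : (quotFunctor X).map f ≫ (quotFunctor X).map g = 0 := by
        rw [← CategoryTheory.Functor.map_comp]
        have hz0 : f ≫ g = 0 := comp_distTriang_mor_zero₁₂ _ hTg
        rw [hz0]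
        exact CategoryTheory.Functor.map_zero _ _ _
      exact ⟨{ Z := (quotFunctor X).obj Cc
               g := (quotFunctor X).map g
               w := w0
               isLimit := (fork_nonempty (Triangle.mk f g δ) hTg hg hφ w0).some }⟩
    exact hne
  exact ⟨{ toPreadditive := instP
           toIsNormalMonoCategory := instNM
           toIsNormalEpiCategory := instNE }⟩
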